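/- For each (z,w) ∈ ℝ^n × PLip there exists a sequence (w^j)_{j∈ℕ} ∈ Γ(z,w) such that: (w¹) w^j ∈ C¹ for every j; (w²) ‖w^j‖_∞ ≤ max(‖z‖, ‖w‖_∞) for every j; and (w³) for every ξ ∈ (−h,0) with w(ξ−0) = w(ξ) there exists δ > 0 such that max_{ζ∈[−δ,δ]} ‖w(ξ+ζ) − w^j(ξ+ζ)‖ → 0 as j → ∞. -/

import Mathlib

open Filter Set MeasureTheory Asymptotics
open scoped InnerProductSpace Topology

noncomputable section

/-- `ℝⁿ` with the Euclidean inner product. -/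
abbrev E (n : ℕ) : Type := EuclideanSpace ℝ (Fin n)

/-- The left limit `w(a - 0)`. -/
def leftLimit {n : ℕ} (w : ℝ → E n) (a : ℝ) : E n :=
  limUnder (nhdsWithin a (Set.Iio a)) w

/-- A function is piecewise Lipschitz on `[a,b)` (or `[a,b]`) if there is a partition
`a = ξ₀ < ξ₁ < … < ξ_k = b` such that it is Lipschitz on every `[ξ_i, ξ_{i+1})`. -/
def PiecewiseLipOn {n : ℕ} (x : ℝ → E n) (a b : ℝ) : Prop :=
  ∃ (k : ℕ) (ξ : ℕ → ℝ), 0 < k ∧ ξ 0 = a ∧ ξ k = b ∧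
    (∀ i < k, ξ i < ξ (i + 1)) ∧
    ∀ i < k, ∃ K, LipschitzOnWith K x (Set.Ico (ξ i) (ξ (i + 1)))

/-- `w ∈ PLip`: piecewise Lipschitz on `[-h, 0)`. -/
def IsPLip {n : ℕ} (h : ℝ) (w : ℝ → E n) : Prop := PiecewiseLipOn w (-h) 0

/-- `w ∈ Lip`: Lipschitz continuous on `[-h, 0)`. -/
def IsLip {n : ℕ} (h : ℝ) (w : ℝ → E n) : Prop :=
  ∃ K, LipschitzOnWith K w (Set.Ico (-h) 0)

/-- `w ∈ C¹`: continuously differentiable on `[-h, 0)` (up to the closure). -/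
def IsC1 {n : ℕ} (h : ℝ) (w : ℝ → E n) : Prop := ContDiffOn ℝ 1 w (Set.Icc (-h) 0)

/-- `w ∈ PLip_*`: piecewise Lipschitz and continuously differentiable on
`[-h, -h+δ]` for some `δ > 0`. -/
def IsPLipStar {n : ℕ} (h : ℝ) (w : ℝ → E n) : Prop :=
  IsPLip h w ∧ ∃ δ > 0, ContDiffOn ℝ 1 w (Set.Icc (-h) (-h + δ))

/-- `‖w‖₁ = ∫_{-h}^0 ‖w(ξ)‖ dξ`. -/
def norm1 {n : ℕ} (h : ℝ) (w : ℝ → E n) : ℝ := ∫ ξ in (-h)..(0:ℝ), ‖w ξ‖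

/-- `‖w‖_∞ = sup_{ξ ∈ [-h,0)} ‖w(ξ)‖`. -/
def normInf {n : ℕ} (h : ℝ) (w : ℝ → E n) : ℝ :=
  ⨆ ξ : Set.Ico (-h) (0:ℝ), ‖w ξ.1‖

/-- `(τ,z,w) ∈ 𝔾 = [0,ϑ] × ℝⁿ × PLip` (the `z`-component is unconstrained). -/
def InG {n : ℕ} (I : ℕ) (h τ : ℝ) (w : ℝ → E n) : Prop :=
  τ ∈ Set.Icc (0:ℝ) ((I:ℝ) * h) ∧ IsPLip h w

/-- `(τ,z,w) ∈ 𝔾_* = ⋃_{i<I} (ih,(i+1)h) × ℝⁿ × PLip_*`. -/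
def InGstar {n : ℕ} (I : ℕ) (h τ : ℝ) (w : ℝ → E n) : Prop :=
  (∃ i : ℕ, i < I ∧ τ ∈ Set.Ioo ((i:ℝ) * h) (((i:ℝ) + 1) * h)) ∧ IsPLipStar h w

/-- `x ∈ Λ(τ,z,w)`. -/
def InLambda {n : ℕ} (I : ℕ) (h τ : ℝ) (z : E n) (w x : ℝ → E n) : Prop :=
  PiecewiseLipOn x (τ - h) ((I:ℝ) * h) ∧ x τ = z ∧
    ∀ t ∈ Set.Ico (τ - h) τ, x t = w (t - τ)

/-- `x ∈ Λ₀(τ,z,w)`: moreover constantly equal to `z` on `[τ,ϑ]`. -/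
def InLambda0 {n : ℕ} (I : ℕ) (h τ : ℝ) (z : E n) (w x : ℝ → E n) : Prop :=
  InLambda I h τ z w x ∧ ∀ t ∈ Set.Icc τ ((I:ℝ) * h), x t = z

/-- `x_t(ξ) = x(t + ξ)`. -/
def shift {n : ℕ} (x : ℝ → E n) (t : ℝ) : ℝ → E n := fun ξ => x (t + ξ)

/-- `(z,w) ∈ P(α)`. -/
def InP {n : ℕ} (h α : ℝ) (z : E n) (w : ℝ → E n) : Prop :=
  IsPLip h w ∧ ‖z‖ ≤ α ∧ normInf h w ≤ α

/-- `υ(τ,z,w) = ‖z‖ + ‖w‖₁ + ‖w(-h)‖ + ‖w(ih - τ)‖` for the `i ∈ {-1,…,I-1}` with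
`τ ∈ (ih, (i+1)h]`, i.e. `i = ⌈τ/h⌉ - 1`. -/
def upsilon {n : ℕ} (h τ : ℝ) (z : E n) (w : ℝ → E n) : ℝ :=
  ‖z‖ + norm1 h w + ‖w (-h)‖ + ‖w (((⌈τ / h⌉ - 1 : ℤ) : ℝ) * h - τ)‖

/-- Condition (φ₁). -/
def Phi1 {n : ℕ} (I : ℕ) (h : ℝ) (φ : ℝ → E n → (ℝ → E n) → ℝ) : Prop :=
  ∀ τ ∈ Set.Icc (0:ℝ) ((I:ℝ) * h), ∀ w : ℝ → E n, IsLip h w →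
    ContinuousOn (fun t => φ t (leftLimit w 0) w) (Set.Icc τ ((I:ℝ) * h))

/-- Condition (φ₂). -/
def Phi2 {n : ℕ} (I : ℕ) (h : ℝ) (φ : ℝ → E n → (ℝ → E n) → ℝ) : Prop :=
  ∀ α > 0, ∃ lam > 0, ∀ τ ∈ Set.Icc (0:ℝ) ((I:ℝ) * h),
    ∀ (z : E n) (w : ℝ → E n) (z' : E n) (w' : ℝ → E n),
      InP h α z w → InP h α z' w' →
        |φ τ z w - φ τ z' w'| ≤ lam * upsilon h τ (z - z') (w - w')

/-- Terminal condition `φ(ϑ,z,w) = σ(z,w)` on `ℝⁿ × PLip`. -/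
def TermCond {n : ℕ} (I : ℕ) (h : ℝ) (σf : E n → (ℝ → E n) → ℝ)
    (φ : ℝ → E n → (ℝ → E n) → ℝ) : Prop :=
  ∀ (z : E n) (w : ℝ → E n), IsPLip h w → φ ((I:ℝ) * h) z w = σf z w

/-- Two functionals agree on `𝔾`. -/
def AgreeOnG {n : ℕ} (I : ℕ) (h : ℝ) (φ φ' : ℝ → E n → (ℝ → E n) → ℝ) : Prop :=
  ∀ (τ : ℝ) (z : E n) (w : ℝ → E n), InG I h τ w → φ τ z w = φ' τ z w

/-- Condition (g): `g` is continuously differentiable on `[0,ϑ] × ℝⁿ`. -/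
def CondG {n : ℕ} (I : ℕ) (h : ℝ) (g : ℝ → E n → E n) : Prop :=
  ContDiffOn ℝ 1 (Function.uncurry g)
    (Set.Icc (0:ℝ) ((I:ℝ) * h) ×ˢ (Set.univ : Set (E n)))

/-- Condition (H₁): continuity. -/
def CondH1 {n : ℕ} (I : ℕ) (h : ℝ) (H : ℝ → E n → E n → E n → ℝ) : Prop :=
  ContinuousOn (fun q : ℝ × E n × E n × E n => H q.1 q.2.1 q.2.2.1 q.2.2.2)
    (Set.Icc (0:ℝ) ((I:ℝ) * h) ×ˢ (Set.univ : Set (E n × E n × E n)))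

/-- Condition (H₂). -/
def CondH2 {n : ℕ} (I : ℕ) (h cH : ℝ) (H : ℝ → E n → E n → E n → ℝ) : Prop :=
  0 < cH ∧ ∀ τ ∈ Set.Icc (0:ℝ) ((I:ℝ) * h), ∀ z r s s' : E n,
    |H τ z r s - H τ z r s'| ≤ cH * (1 + ‖z‖ + ‖r‖) * ‖s - s'‖

/-- Condition (H₃). -/
def CondH3 {n : ℕ} (I : ℕ) (h : ℝ) (H : ℝ → E n → E n → E n → ℝ) : Prop :=
  ∀ α > 0, ∃ lam > 0, ∀ τ ∈ Set.Icc (0:ℝ) ((I:ℝ) * h), ∀ z r z' r' s : E n,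
    ‖z‖ ≤ α → ‖r‖ ≤ α → ‖z'‖ ≤ α → ‖r'‖ ≤ α →
      |H τ z r s - H τ z' r' s| ≤ lam * (‖z - z'‖ + ‖r - r'‖) * (1 + ‖s‖)

/-- Condition (σ). -/
def CondSigma {n : ℕ} (h : ℝ) (σf : E n → (ℝ → E n) → ℝ) : Prop :=
  ∀ α > 0, ∃ lam > 0, ∀ (z : E n) (w : ℝ → E n) (z' : E n) (w' : ℝ → E n),
    InP h α z w → InP h α z' w' →
      |σf z w - σf z' w'| ≤ lam * (‖z - z'‖ + norm1 h (fun ξ => w ξ - w' ξ))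

/-- `∂^{ci}_{τ,w} g(τ,w) = ∂g(τ,w(-h))/∂τ + ∇_x g(τ,w(-h)) · (d⁺w(-h)/dξ)`. -/
def ciDg {n : ℕ} (I : ℕ) (h : ℝ) (g : ℝ → E n → E n) (τ : ℝ) (w : ℝ → E n) : E n :=
  derivWithin (fun t => g t (w (-h))) (Set.Icc (0:ℝ) ((I:ℝ) * h)) τ +
    fderiv ℝ (g τ) (w (-h)) (derivWithin w (Set.Ici (-h)) (-h))

/-- `F^η(x,y) = {l : ‖l‖ ≤ c_H (1 + ‖x‖ + ‖y‖) + η}`. -/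
def Fset {n : ℕ} (cH η : ℝ) (x y : E n) : Set (E n) :=
  {l : E n | ‖l‖ ≤ cH * (1 + ‖x‖ + ‖y‖) + η}

/-- `x ∈ X^η(τ,z,w)`. -/
def InX {n : ℕ} (I : ℕ) (h : ℝ) (g : ℝ → E n → E n) (cH η τ : ℝ) (z : E n)
    (w x : ℝ → E n) : Prop :=
  InLambda I h τ z w x ∧
  (∃ K, LipschitzOnWith K (fun t => x t - g t (x (t - h))) (Set.Icc τ ((I:ℝ) * h))) ∧
  ∀ᵐ t ∂(volume : Measure ℝ), t ∈ Set.Icc τ ((I:ℝ) * h) →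
    ∃ l ∈ Fset cH η (x t) (x (t - h)),
      HasDerivAt (fun r => x r - g r (x (r - h))) l t

/-- `ω(τ,t,x,s)`. -/
def omegaF {n : ℕ} (h : ℝ) (g : ℝ → E n → E n) (H : ℝ → E n → E n → E n → ℝ)
    (τ t : ℝ) (x : ℝ → E n) (s : E n) : ℝ :=
  (∫ ξ in τ..t, H ξ (x ξ) (x (ξ - h)) s) -
    ⟪(x t - g t (x (t - h))) - (x τ - g τ (x (τ - h))), s⟫_ℝ

/-- The upper minimax inequality (U):
`inf_{x ∈ X^η(τ,z,w)} [φ(t,x(t),x_t) + ω(τ,t,x,s)] ≤ φ(τ,z,w)`. -/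
def Uineq {n : ℕ} (I : ℕ) (h : ℝ) (g : ℝ → E n → E n) (H : ℝ → E n → E n → E n → ℝ)
    (cH : ℝ) (φ : ℝ → E n → (ℝ → E n) → ℝ) (τ : ℝ) (z : E n) (w : ℝ → E n)
    (t : ℝ) (s : E n) (η : ℝ) : Prop :=
  ∀ ε > 0, ∃ x : ℝ → E n, InX I h g cH η τ z w x ∧
    φ t (x t) (shift x t) + omegaF h g H τ t x s ≤ φ τ z w + ε

/-- The lower minimax inequality (L):
`sup_{x ∈ X^η(τ,z,w)} [φ(t,x(t),x_t) + ω(τ,t,x,s)] ≥ φ(τ,z,w)`. -/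
def Lineq {n : ℕ} (I : ℕ) (h : ℝ) (g : ℝ → E n → E n) (H : ℝ → E n → E n → E n → ℝ)
    (cH : ℝ) (φ : ℝ → E n → (ℝ → E n) → ℝ) (τ : ℝ) (z : E n) (w : ℝ → E n)
    (t : ℝ) (s : E n) (η : ℝ) : Prop :=
  ∀ ε > 0, ∃ x : ℝ → E n, InX I h g cH η τ z w x ∧
    φ τ z w - ε ≤ φ t (x t) (shift x t) + omegaF h g H τ t x s

/-- Minimax solution of the Cauchy problem. -/
def IsMinimaxSol {n : ℕ} (I : ℕ) (h : ℝ) (g : ℝ → E n → E n)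
    (H : ℝ → E n → E n → E n → ℝ) (cH : ℝ) (σf : E n → (ℝ → E n) → ℝ)
    (φ : ℝ → E n → (ℝ → E n) → ℝ) : Prop :=
  Phi1 I h φ ∧ Phi2 I h φ ∧ TermCond I h σf φ ∧
  ∀ (τ : ℝ) (z : E n) (w : ℝ → E n), InG I h τ w → τ < (I:ℝ) * h →
    ∀ t ∈ Set.Ioc τ ((I:ℝ) * h), ∀ s : E n,
      Uineq I h g H cH φ τ z w t s 0 ∧ Lineq I h g H cH φ τ z w t s 0

/-- Lip-minimax solution of the Cauchy problem. -/
def IsLipMinimaxSol {n : ℕ} (I : ℕ) (h : ℝ) (g : ℝ → E n → E n)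
    (H : ℝ → E n → E n → E n → ℝ) (cH : ℝ) (σf : E n → (ℝ → E n) → ℝ)
    (φ : ℝ → E n → (ℝ → E n) → ℝ) : Prop :=
  Phi1 I h φ ∧ Phi2 I h φ ∧
  (∀ w : ℝ → E n, IsLip h w →
    φ ((I:ℝ) * h) (leftLimit w 0) w = σf (leftLimit w 0) w) ∧
  ∀ τ ∈ Set.Ico (0:ℝ) ((I:ℝ) * h), ∀ w : ℝ → E n, IsLip h w →
    ∀ t ∈ Set.Ioc τ ((I:ℝ) * h), ∀ s : E n,
      Uineq I h g H cH φ τ (leftLimit w 0) w t s 0 ∧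
      Lineq I h g H cH φ τ (leftLimit w 0) w t s 0

/-- C¹-minimax solution of the Cauchy problem. -/
def IsC1MinimaxSol {n : ℕ} (I : ℕ) (h : ℝ) (g : ℝ → E n → E n)
    (H : ℝ → E n → E n → E n → ℝ) (cH : ℝ) (σf : E n → (ℝ → E n) → ℝ)
    (φ : ℝ → E n → (ℝ → E n) → ℝ) : Prop :=
  Phi1 I h φ ∧ Phi2 I h φ ∧
  (∀ w : ℝ → E n, IsC1 h w →
    φ ((I:ℝ) * h) (leftLimit w 0) w = σf (leftLimit w 0) w) ∧
  ∀ i : ℕ, i < I → ∀ τ ∈ Set.Ico ((i:ℝ) * h) (((i:ℝ) + 1) * h),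
    ∀ w : ℝ → E n, IsC1 h w → ∀ t ∈ Set.Ioc τ (((i:ℝ) + 1) * h), ∀ s : E n,
      ∀ η ∈ Set.Ioc (0:ℝ) 1,
        Uineq I h g H cH φ τ (leftLimit w 0) w t s η ∧
        Lineq I h g H cH φ τ (leftLimit w 0) w t s η

/-- `O⁺_δ(τ,z) = {(t,x) ∈ [τ,τ+δ] × ℝⁿ : ‖x - z‖ ≤ δ}`. -/
def OPlus {n : ℕ} (δ τ : ℝ) (z : E n) : Set (ℝ × E n) :=
  {p : ℝ × E n | p.1 ∈ Set.Icc τ (τ + δ) ∧ ‖p.2 - z‖ ≤ δ}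

/-- Viscosity solution of the Cauchy problem. -/
def IsViscositySol {n : ℕ} (I : ℕ) (h : ℝ) (g : ℝ → E n → E n)
    (H : ℝ → E n → E n → E n → ℝ) (σf : E n → (ℝ → E n) → ℝ)
    (φ : ℝ → E n → (ℝ → E n) → ℝ) : Prop :=
  Phi1 I h φ ∧ Phi2 I h φ ∧ TermCond I h σf φ ∧
  (∀ (τ : ℝ) (z : E n) (w : ℝ → E n), InGstar I h τ w →
    ∀ ψ : ℝ → E n → ℝ, ContDiff ℝ 1 (Function.uncurry ψ) →
    ∀ δ > 0, ∀ κ : ℝ → E n, InLambda0 I h τ z w κ →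
    (∀ (t : ℝ) (x : E n), (t, x) ∈ OPlus δ τ z →
        φ τ z w - ψ τ z ≤ φ t x (shift κ t) - ψ t x) →
    deriv (fun r => ψ r z) τ + ⟪ciDg I h g τ w, gradient (ψ τ) z⟫_ℝ +
      H τ z (w (-h)) (gradient (ψ τ) z) ≤ 0) ∧
  (∀ (τ : ℝ) (z : E n) (w : ℝ → E n), InGstar I h τ w →
    ∀ ψ : ℝ → E n → ℝ, ContDiff ℝ 1 (Function.uncurry ψ) →
    ∀ δ > 0, ∀ κ : ℝ → E n, InLambda0 I h τ z w κ →
    (∀ (t : ℝ) (x : E n), (t, x) ∈ OPlus δ τ z →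
        φ t x (shift κ t) - ψ t x ≤ φ τ z w - ψ τ z) →
    0 ≤ deriv (fun r => ψ r z) τ + ⟪ciDg I h g τ w, gradient (ψ τ) z⟫_ℝ +
      H τ z (w (-h)) (gradient (ψ τ) z))

/-- `φ` is ci-differentiable at `(τ,z,w)` with ci-derivative `a` and gradient `p`. -/
def HasCiDeriv {n : ℕ} (I : ℕ) (h : ℝ) (φ : ℝ → E n → (ℝ → E n) → ℝ)
    (τ : ℝ) (z : E n) (w : ℝ → E n) (a : ℝ) (p : E n) : Prop :=
  ∀ x : ℝ → E n, InLambda I h τ z w x →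
    (fun q : ℝ × E n =>
        φ q.1 q.2 (shift x q.1) - φ τ z w - (q.1 - τ) * a - ⟪q.2 - z, p⟫_ℝ)
      =o[nhdsWithin (τ, z) (Set.Icc τ ((I:ℝ) * h) ×ˢ (Set.univ : Set (E n)))]
      fun q : ℝ × E n => |q.1 - τ| + ‖q.2 - z‖

/-- Lower right directional derivative `∂⁻_{(1,l)} φ(τ,z,w)` along `κ ∈ Λ₀`. -/
def dLow {n : ℕ} (φ : ℝ → E n → (ℝ → E n) → ℝ) (τ : ℝ) (z : E n) (w : ℝ → E n)
    (l : E n) (κ : ℝ → E n) : EReal :=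
  Filter.liminf
    (fun δ : ℝ =>
      (((φ (τ + δ) (z + δ • l) (shift κ (τ + δ)) - φ τ z w) / δ : ℝ) : EReal))
    (nhdsWithin 0 (Set.Ioi 0))

/-- Upper right directional derivative `∂⁺_{(1,l)} φ(τ,z,w)` along `κ ∈ Λ₀`. -/
def dUpp {n : ℕ} (φ : ℝ → E n → (ℝ → E n) → ℝ) (τ : ℝ) (z : E n) (w : ℝ → E n)
    (l : E n) (κ : ℝ → E n) : EReal :=
  Filter.limsup
    (fun δ : ℝ =>
      (((φ (τ + δ) (z + δ • l) (shift κ (τ + δ)) - φ τ z w) / δ : ℝ) : EReal))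
    (nhdsWithin 0 (Set.Ioi 0))

/-- `(p₀,p) ∈ D⁻φ(τ,z,w)`. -/
def InSubdiff {n : ℕ} (I : ℕ) (h : ℝ) (φ : ℝ → E n → (ℝ → E n) → ℝ)
    (τ : ℝ) (z : E n) (w : ℝ → E n) (p0 : ℝ) (p : E n) : Prop :=
  ∀ κ : ℝ → E n, InLambda0 I h τ z w κ →
    ∀ ε > 0, ∃ δ > 0, ∀ (t : ℝ) (x : E n),
      (t, x) ∈ OPlus δ τ z → (t, x) ≠ (τ, z) →
        -ε ≤ (φ t x (shift κ t) - φ τ z w - (t - τ) * p0 - ⟪x - z, p⟫_ℝ) /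
          (|t - τ| + ‖x - z‖)

/-- `(q₀,q) ∈ D⁺φ(τ,z,w)`. -/
def InSuperdiff {n : ℕ} (I : ℕ) (h : ℝ) (φ : ℝ → E n → (ℝ → E n) → ℝ)
    (τ : ℝ) (z : E n) (w : ℝ → E n) (q0 : ℝ) (q : E n) : Prop :=
  ∀ κ : ℝ → E n, InLambda0 I h τ z w κ →
    ∀ ε > 0, ∃ δ > 0, ∀ (t : ℝ) (x : E n),
      (t, x) ∈ OPlus δ τ z → (t, x) ≠ (τ, z) →
        (φ t x (shift κ t) - φ τ z w - (t - τ) * q0 - ⟪x - z, q⟫_ℝ) /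
          (|t - τ| + ‖x - z‖) ≤ ε

/-- The Dini (directional-derivative) form of the generalized solution:
statement (c) of Theorem `teo:equivalent_solutions`. -/
def DiniSol {n : ℕ} (I : ℕ) (h : ℝ) (g : ℝ → E n → E n)
    (H : ℝ → E n → E n → E n → ℝ) (cH : ℝ) (σf : E n → (ℝ → E n) → ℝ)
    (φ : ℝ → E n → (ℝ → E n) → ℝ) : Prop :=
  Phi1 I h φ ∧ Phi2 I h φ ∧ TermCond I h σf φ ∧
  ∀ (τ : ℝ) (z : E n) (w : ℝ → E n), InGstar I h τ w → ∀ s : E n,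
    ∀ κ : ℝ → E n, InLambda0 I h τ z w κ →
      (∀ ε > 0, ∃ l : E n, l - ciDg I h g τ w ∈ Fset cH 0 z (w (-h)) ∧
        dLow φ τ z w l κ +
          ((⟪ciDg I h g τ w, s⟫_ℝ + H τ z (w (-h)) s - ⟪l, s⟫_ℝ : ℝ) : EReal)
          ≤ ((ε : ℝ) : EReal)) ∧
      (∀ ε > 0, ∃ l : E n, l - ciDg I h g τ w ∈ Fset cH 0 z (w (-h)) ∧
        ((-ε : ℝ) : EReal) ≤ dUpp φ τ z w l κ +
          ((⟪ciDg I h g τ w, s⟫_ℝ + H τ z (w (-h)) s - ⟪l, s⟫_ℝ : ℝ) : EReal))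

/-- The sub/superdifferential form of the generalized solution:
statement (d) of Theorem `teo:equivalent_solutions`. -/
def SubSuperSol {n : ℕ} (I : ℕ) (h : ℝ) (g : ℝ → E n → E n)
    (H : ℝ → E n → E n → E n → ℝ) (σf : E n → (ℝ → E n) → ℝ)
    (φ : ℝ → E n → (ℝ → E n) → ℝ) : Prop :=
  Phi1 I h φ ∧ Phi2 I h φ ∧ TermCond I h σf φ ∧
  ∀ (τ : ℝ) (z : E n) (w : ℝ → E n), InGstar I h τ w →
    (∀ (p0 : ℝ) (p : E n), InSubdiff I h φ τ z w p0 p →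
      p0 + ⟪ciDg I h g τ w, p⟫_ℝ + H τ z (w (-h)) p ≤ 0) ∧
    (∀ (q0 : ℝ) (q : E n), InSuperdiff I h φ τ z w q0 q →
      0 ≤ q0 + ⟪ciDg I h g τ w, q⟫_ℝ + H τ z (w (-h)) q)

/-- `(w^j) ∈ Γ(z,w)`. -/
def InGamma {n : ℕ} (h : ℝ) (z : E n) (w : ℝ → E n) (ws : ℕ → ℝ → E n) : Prop :=
  (∀ j, IsLip h (ws j)) ∧
  Tendsto (fun j => norm1 h (fun ξ => w ξ - ws j ξ)) atTop (nhds 0) ∧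
  Tendsto (fun j => ‖z - leftLimit (ws j) 0‖) atTop (nhds 0) ∧
  ∀ ξ ∈ Set.Ico (-h) (0:ℝ), Tendsto (fun j => ‖w ξ - ws j ξ‖) atTop (nhds 0)

/-- Condition (w³) of Lemma `lem:Gamma_nonempty`. -/
def CondW3 {n : ℕ} (h : ℝ) (w : ℝ → E n) (ws : ℕ → ℝ → E n) : Prop :=
  ∀ ξ ∈ Set.Ioo (-h) (0:ℝ), leftLimit w ξ = w ξ →
    ∃ δ > 0, Tendsto
      (fun j => ⨆ ζ : Set.Icc (-δ) δ, ‖w (ξ + ζ.1) - ws j (ξ + ζ.1)‖)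
      atTop (nhds 0)

/-- `θ^α_γ(τ)` (with `λ_H = λ_H(α)`, `λ_g = λ_g(α)` given). -/
def thetaG (lamH lamg h γ τ : ℝ) : ℝ :=
  (Real.exp (-(4 * lamH + 2 * lamg / h) * τ) - γ) / γ

/-- `ν^α_{γ,ε}(τ,z,w)`. -/
def nuG {n : ℕ} (lamH lamg h γ ε τ : ℝ) (z : E n) (w : ℝ → E n) : ℝ :=
  thetaG lamH lamg h γ τ *
    (Real.sqrt (ε ^ 4 + ‖z‖ ^ 2) +
      2 * lamH * ∫ ξ in (-h)..(0:ℝ), (1 - 2 * lamg * ξ / h) * ‖w ξ‖)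

/-- `∇_z ν^α_{γ,ε}(τ,z,·)`. -/
def gradNuG {n : ℕ} (lamH lamg h γ ε τ : ℝ) (z : E n) : E n :=
  (thetaG lamH lamg h γ τ / Real.sqrt (ε ^ 4 + ‖z‖ ^ 2)) • z

/-- `Δy(t) = Δx(t) - g(t,x(t-h)) + g(t,x'(t-h))`. -/
def dY {n : ℕ} (h : ℝ) (g : ℝ → E n → E n) (x x' : ℝ → E n) : ℝ → E n :=
  fun t => (x t - x' t) - g t (x (t - h)) + g t (x' (t - h))

/-- `ΔH^α_{γ,ε}(ξ)`. -/
def dHdiff {n : ℕ} (lamH lamg h γ ε : ℝ) (g : ℝ → E n → E n)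
    (H : ℝ → E n → E n → E n → ℝ) (x x' : ℝ → E n) (ξ : ℝ) : ℝ :=
  H ξ (x ξ) (x (ξ - h)) (gradNuG lamH lamg h γ ε ξ (dY h g x x' ξ)) -
    H ξ (x' ξ) (x' (ξ - h)) (gradNuG lamH lamg h γ ε ξ (dY h g x x' ξ)) +
    ⟪dY h g x x' ξ, gradNuG lamH lamg h γ ε ξ (dY h g x x' ξ)⟫_ℝ

/-- Continuity of `φ̂ : [0,ϑ] × Lip → ℝ` with respect to the uniform norm. -/
def HatContinuous {n : ℕ} (I : ℕ) (h : ℝ) (φh : ℝ → (ℝ → E n) → ℝ) : Prop :=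
  ∀ τ ∈ Set.Icc (0:ℝ) ((I:ℝ) * h), ∀ w : ℝ → E n, IsLip h w → ∀ ε > 0, ∃ δ > 0,
    ∀ τ' ∈ Set.Icc (0:ℝ) ((I:ℝ) * h), ∀ w' : ℝ → E n, IsLip h w' →
      |τ' - τ| ≤ δ → (∀ ξ ∈ Set.Ico (-h) (0:ℝ), ‖w' ξ - w ξ‖ ≤ δ) →
        |φh τ' w' - φh τ w| ≤ ε

/-- The functional `φ̂` from Lemma `lem:ex_un_minimax_sol`: continuous w.r.t. the uniform
norm, satisfying the terminal condition on `Lip` and the two minimax inequalities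
over `X⁰`. -/
def HatSol {n : ℕ} (I : ℕ) (h : ℝ) (g : ℝ → E n → E n)
    (H : ℝ → E n → E n → E n → ℝ) (cH : ℝ) (σf : E n → (ℝ → E n) → ℝ)
    (φh : ℝ → (ℝ → E n) → ℝ) : Prop :=
  HatContinuous I h φh ∧
  (∀ w : ℝ → E n, IsLip h w → φh ((I:ℝ) * h) w = σf (leftLimit w 0) w) ∧
  ∀ τ ∈ Set.Ico (0:ℝ) ((I:ℝ) * h), ∀ w : ℝ → E n, IsLip h w →
    ∀ t ∈ Set.Ioc τ ((I:ℝ) * h), ∀ s : E n,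
      (∀ ε > 0, ∃ x : ℝ → E n, InX I h g cH 0 τ (leftLimit w 0) w x ∧
        φh t (shift x t) + omegaF h g H τ t x s ≤ φh τ w + ε) ∧
      (∀ ε > 0, ∃ x : ℝ → E n, InX I h g cH 0 τ (leftLimit w 0) w x ∧
        φh τ w - ε ≤ φh t (shift x t) + omegaF h g H τ t x s)
namespace GammaAux

variable {n : ℕ}

/-- forward Steklov average -/
noncomputable def avg (u : ℝ → E n) (ε : ℝ) (x : ℝ) : E n :=
  ε⁻¹ • ∫ t in x..(x + ε), u t

lemma avg_sub_le {u : ℝ → E n} {ε : ℝ} (hε : 0 < ε) {x : ℝ}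
    (hint : IntervalIntegrable u volume x (x + ε)) {c : E n} {C : ℝ}
    (hC : ∀ t ∈ Set.Icc x (x + ε), ‖u t - c‖ ≤ C) :
    ‖avg u ε x - c‖ ≤ C := by
  have h1 : avg u ε x - c = ε⁻¹ • ∫ t in x..(x + ε), (u t - c) := by
    rw [avg, intervalIntegral.integral_sub hint intervalIntegrable_const, smul_sub,
      intervalIntegral.integral_const]
    congr 1
    rw [add_sub_cancel_left, smul_smul, inv_mul_cancel₀ hε.ne', one_smul]
  have h2 : ‖∫ t in x..(x + ε), (u t - c)‖ ≤ C * |x + ε - x| := by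
    apply intervalIntegral.norm_integral_le_of_norm_le_const
    intro t ht
    rw [Set.uIoc_of_le (by linarith)] at ht
    exact hC t ⟨ht.1.le, ht.2⟩
  rw [h1, norm_smul, Real.norm_eq_abs, abs_of_pos (inv_pos.mpr hε)]
  rw [add_sub_cancel_left, abs_of_pos hε] at h2
  calc ε⁻¹ * ‖∫ t in x..(x + ε), (u t - c)‖ ≤ ε⁻¹ * (C * ε) := by
        exact mul_le_mul_of_nonneg_left h2 (inv_pos.mpr hε).le
    _ = C := by field_simp

lemma avg_continuous {v : ℝ → E n}
    (hint : ∀ a b : ℝ, IntervalIntegrable v volume a b) (ε : ℝ) :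
    Continuous (avg v ε) := by
  have hU : Continuous fun y => ∫ t in (0:ℝ)..y, v t :=
    intervalIntegral.continuous_primitive hint 0
  have heq : avg v ε = fun x =>
      ε⁻¹ • ((∫ t in (0:ℝ)..(x + ε), v t) - ∫ t in (0:ℝ)..x, v t) := by
    funext x
    rw [avg, intervalIntegral.integral_interval_sub_left (hint 0 (x + ε)) (hint 0 x)]
  rw [heq]
  exact ((hU.comp (continuous_id.add continuous_const)).sub hU).const_smul ε⁻¹

lemma avg_hasDerivAt {u : ℝ → E n} (hu : Continuous u) {ε : ℝ} (hε : 0 < ε) (x : ℝ) :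
    HasDerivAt (avg u ε) (ε⁻¹ • (u (x + ε) - u x)) x := by
  have hW : ∀ y : ℝ, HasDerivAt (fun y => ∫ t in (0:ℝ)..y, u t) (u y) y := fun y =>
    (hu.integral_hasStrictDerivAt 0 y).hasDerivAt
  have heq : avg u ε = fun x =>
      ε⁻¹ • ((∫ t in (0:ℝ)..(x + ε), u t) - ∫ t in (0:ℝ)..x, u t) := by
    funext y
    rw [avg, intervalIntegral.integral_interval_sub_left
      ((hu.intervalIntegrable) 0 (y + ε)) ((hu.intervalIntegrable) 0 y)]
  rw [heq]
  have h1 : HasDerivAt (fun y : ℝ => ∫ t in (0:ℝ)..(y + ε), u t) (u (x + ε)) x := by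
    have := (hW (x + ε)).scomp x ((hasDerivAt_id x).add_const ε)
    rw [one_smul] at this
    exact this
  exact ((h1.sub (hW x)).const_smul ε⁻¹)

lemma avg_contDiff {u : ℝ → E n} (hu : Continuous u) {ε : ℝ} (hε : 0 < ε) :
    ContDiff ℝ 1 (avg u ε) := by
  rw [contDiff_one_iff_deriv]
  refine ⟨fun x => (avg_hasDerivAt hu hε x).differentiableAt, ?_⟩
  have : deriv (avg u ε) = fun x => ε⁻¹ • (u (x + ε) - u x) := by
    funext x; exact (avg_hasDerivAt hu hε x).deriv
  rw [this]
  exact (((hu.comp (continuous_id.add continuous_const)).sub hu).const_smul ε⁻¹)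

lemma avg_norm_le {u : ℝ → E n} {ε M : ℝ} (hε : 0 < ε)
    (hint : ∀ a b : ℝ, IntervalIntegrable u volume a b)
    (hM : ∀ t, ‖u t‖ ≤ M) (x : ℝ) : ‖avg u ε x‖ ≤ M := by
  have := avg_sub_le hε (hint x (x + ε)) (c := 0) (C := M)
    (fun t _ => by simpa using hM t)
  simpa using this

/-- double Steklov average -/
noncomputable def davg (v : ℝ → E n) (ε : ℝ) : ℝ → E n := avg (avg v ε) ε

lemma davg_sub_le {v : ℝ → E n} {ε : ℝ} (hε : 0 < ε)
    (hint : ∀ a b : ℝ, IntervalIntegrable v volume a b) {x : ℝ} {c : E n} {C : ℝ}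
    (hC : ∀ t ∈ Set.Icc x (x + 2 * ε), ‖v t - c‖ ≤ C) :
    ‖davg v ε x - c‖ ≤ C := by
  apply avg_sub_le hε ((avg_continuous hint ε).intervalIntegrable _ _)
  intro s hs
  apply avg_sub_le hε (hint s (s + ε))
  intro t ht
  exact hC t ⟨hs.1.trans ht.1, ht.2.trans (by linarith [hs.2])⟩

lemma davg_contDiff {v : ℝ → E n} {ε : ℝ} (hε : 0 < ε)
    (hint : ∀ a b : ℝ, IntervalIntegrable v volume a b) :
    ContDiff ℝ 1 (davg v ε) :=
  avg_contDiff (avg_continuous hint ε) hε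

lemma davg_norm_le {v : ℝ → E n} {ε M : ℝ} (hε : 0 < ε)
    (hint : ∀ a b : ℝ, IntervalIntegrable v volume a b)
    (hM : ∀ t, ‖v t‖ ≤ M) (x : ℝ) : ‖davg v ε x‖ ≤ M :=
  avg_norm_le hε ((avg_continuous hint ε).intervalIntegrable)
    (fun t => avg_norm_le hε hint hM t) x

lemma davg_lipschitz {v : ℝ → E n} {ε M : ℝ} (hε : 0 < ε)
    (hint : ∀ a b : ℝ, IntervalIntegrable v volume a b)
    (hM : ∀ t, ‖v t‖ ≤ M) :
    LipschitzWith (Real.toNNReal (2 * M / ε)) (davg v ε) := by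
  have hM0 : 0 ≤ M := le_trans (norm_nonneg _) (hM 0)
  have hAc : Continuous (avg v ε) := avg_continuous hint ε
  apply lipschitzWith_of_nnnorm_deriv_le
    (fun x => (avg_hasDerivAt hAc hε x).differentiableAt)
  intro x
  rw [(avg_hasDerivAt hAc hε x).deriv, ← NNReal.coe_le_coe, coe_nnnorm,
    Real.coe_toNNReal _ (by positivity)]
  rw [norm_smul, Real.norm_eq_abs, abs_of_pos (inv_pos.mpr hε)]
  have h1 : ‖avg v ε (x + ε) - avg v ε x‖ ≤ 2 * M := by
    calc ‖avg v ε (x + ε) - avg v ε x‖ ≤ ‖avg v ε (x + ε)‖ + ‖avg v ε x‖ := norm_sub_le _ _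
      _ ≤ M + M := add_le_add (avg_norm_le hε hint hM _) (avg_norm_le hε hint hM _)
      _ = 2 * M := by ring
  calc ε⁻¹ * ‖avg v ε (x + ε) - avg v ε x‖ ≤ ε⁻¹ * (2 * M) :=
        mul_le_mul_of_nonneg_left h1 (inv_pos.mpr hε).le
    _ = 2 * M / ε := by field_simp

lemma mono_xi {k : ℕ} {ξ : ℕ → ℝ} (hmono : ∀ i < k, ξ i < ξ (i + 1)) :
    ∀ i j, i ≤ j → j ≤ k → ξ i ≤ ξ j := by
  intro i j hij hjk
  induction j with
  | zero => simp [Nat.le_zero.mp hij]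
  | succ m ih =>
    rcases Nat.lt_or_ge i (m + 1) with hlt | hge
    · exact (ih (Nat.lt_succ_iff.mp hlt) (le_trans (Nat.le_succ m) hjk)).trans
        (hmono m (Nat.lt_of_succ_le hjk)).le
    · rw [le_antisymm hij hge]

lemma find_piece (ξ : ℕ → ℝ) :
    ∀ m, ∀ x : ℝ, ξ 0 ≤ x → x < ξ m → ∃ i < m, x ∈ Set.Ico (ξ i) (ξ (i + 1)) := by
  intro m
  induction m with
  | zero => intro x h1 h2; exact absurd (lt_of_le_of_lt h1 h2) (lt_irrefl _)
  | succ m ih =>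
    intro x h1 h2
    rcases le_or_gt (ξ m) x with hge | hlt
    · exact ⟨m, Nat.lt_succ_self m, hge, h2⟩
    · obtain ⟨i, hi, hx⟩ := ih x h1 hlt
      exact ⟨i, hi.trans (Nat.lt_succ_self m), hx⟩

end GammaAux


/-- Lemma `lem:Gamma_nonempty`: every `(z,w) ∈ ℝⁿ × PLip` admits an approximating
sequence in `Γ(z,w)` satisfying conditions (w¹), (w²), (w³). -/
theorem gamma_nonempty
    {n : ℕ} (hn : 1 ≤ n) (h : ℝ) (hh : 0 < h)
    (z : E n) (w : ℝ → E n) (hw : IsPLip h w) :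
    ∃ ws : ℕ → ℝ → E n, InGamma h z w ws ∧
      (∀ j, IsC1 h (ws j)) ∧
      (∀ j, normInf h (ws j) ≤ max ‖z‖ (normInf h w)) ∧
      CondW3 h w ws := by
  classical
  obtain ⟨k, ξ, hk, hξ0, hξk, hmono, hlip⟩ := hw
  choose K hK using hlip
  have hxi_ge : ∀ i, i ≤ k → -h ≤ ξ i := by
    intro i hi; rw [← hξ0]; exact GammaAux.mono_xi hmono 0 i (Nat.zero_le i) hi
  have hxi_le : ∀ i, i ≤ k → ξ i ≤ 0 := by
    intro i hi; rw [← hξk]; exact GammaAux.mono_xi hmono i k hi le_rfl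
  have hsub : ∀ i, i < k → Set.Ico (ξ i) (ξ (i + 1)) ⊆ Set.Ico (-h) 0 := by
    intro i hi x hx
    exact ⟨le_trans (hxi_ge i hi.le) hx.1, lt_of_lt_of_le hx.2 (hxi_le (i + 1) hi)⟩
  have hcover : ∀ x ∈ Set.Ico (-h) (0 : ℝ), ∃ i, i < k ∧ x ∈ Set.Ico (ξ i) (ξ (i + 1)) := by
    intro x hx
    obtain ⟨i, hi, hxi⟩ := GammaAux.find_piece ξ k x (by rw [hξ0]; exact hx.1)
      (by rw [hξk]; exact hx.2)
    exact ⟨i, hi, hxi⟩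
  -- a global bound for ‖w‖ on [-h, 0)
  have hpiece : ∀ i (hi : i < k), ∀ x ∈ Set.Ico (ξ i) (ξ (i + 1)),
      ‖w x‖ ≤ ‖w (ξ i)‖ + (K i hi : ℝ) * (ξ (i + 1) - ξ i) := by
    intro i hi x hx
    have hd := (hK i hi).dist_le_mul x hx (ξ i) ⟨le_refl _, hmono i hi⟩
    rw [dist_eq_norm, Real.dist_eq] at hd
    have h1 : ‖w x‖ - ‖w (ξ i)‖ ≤ ‖w x - w (ξ i)‖ := norm_sub_norm_le _ _
    have h2 : |x - ξ i| ≤ ξ (i + 1) - ξ i := by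
      rw [abs_of_nonneg (sub_nonneg.mpr hx.1)]; linarith [hx.2]
    nlinarith [(K i hi).coe_nonneg]
  have hCbound : ∃ C : ℝ, ∀ x ∈ Set.Ico (-h) (0 : ℝ), ‖w x‖ ≤ C := by
    set B : ℕ → ℝ := fun i =>
      if hi : i < k then ‖w (ξ i)‖ + (K i hi : ℝ) * (ξ (i + 1) - ξ i) else 0 with hB
    have hkne : (Finset.range k).Nonempty := Finset.nonempty_range_iff.mpr hk.ne'
    refine ⟨(Finset.range k).sup' hkne B, fun x hx => ?_⟩
    obtain ⟨i, hi, hxi⟩ := hcover x hx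
    calc ‖w x‖ ≤ B i := by rw [hB]; simp only [dif_pos hi]; exact hpiece i hi x hxi
      _ ≤ _ := Finset.le_sup' B (Finset.mem_range.mpr hi)
  obtain ⟨C, hC⟩ := hCbound
  have hBdd : BddAbove (Set.range fun p : Set.Ico (-h) (0 : ℝ) => ‖w p.1‖) :=
    ⟨C, by rintro _ ⟨p, rfl⟩; exact hC p.1 p.2⟩
  haveI hne : Nonempty (Set.Ico (-h) (0 : ℝ)) := ⟨⟨-h, le_refl _, by linarith⟩⟩
  have hleInf : ∀ x, x ∈ Set.Ico (-h) (0 : ℝ) → ‖w x‖ ≤ normInf h w := fun x hx =>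
    le_ciSup hBdd (⟨x, hx⟩ : Set.Ico (-h) (0 : ℝ))
  set M : ℝ := max ‖z‖ (normInf h w) with hM
  have hM0 : 0 ≤ M := le_trans (norm_nonneg z) (le_max_left _ _)
  -- the auxiliary global function v
  set v : ℝ → E n := fun x => if x < -h then w (-h) else if x < 0 then w x else z with hv
  have hv_Ico : ∀ x ∈ Set.Ico (-h) (0 : ℝ), v x = w x := by
    intro x hx; simp only [hv]
    rw [if_neg (not_lt.mpr hx.1), if_pos hx.2]
  have hv_ge : ∀ x : ℝ, 0 ≤ x → v x = z := by
    intro x hx; simp only [hv]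
    rw [if_neg (not_lt.mpr (by linarith : -h ≤ x)), if_neg (not_lt.mpr hx)]
  have hv_lt : ∀ x : ℝ, x < -h → v x = w (-h) := by
    intro x hx; simp only [hv]
    rw [if_pos hx]
  have hwh : ‖w (-h)‖ ≤ M := le_trans (hleInf (-h) ⟨le_refl _, by linarith⟩) (le_max_right _ _)
  have hvM : ∀ x, ‖v x‖ ≤ M := by
    intro x
    rcases lt_or_ge x (-h) with h1 | h1
    · rw [hv_lt x h1]; exact hwh
    · rcases lt_or_ge x 0 with h2 | h2
      · rw [hv_Ico x ⟨h1, h2⟩]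
        exact le_trans (hleInf x ⟨h1, h2⟩) (le_max_right _ _)
      · rw [hv_ge x h2]; exact le_max_left _ _
  -- measurability and integrability of v
  have hv_meas : AEStronglyMeasurable v volume := by
    have hIco : AEStronglyMeasurable v (volume.restrict (Set.Ico (-h) (0 : ℝ))) := by
      have hcov : Set.Ico (-h) (0 : ℝ) = ⋃ i : Fin k, Set.Ico (ξ i) (ξ (i + 1)) := by
        apply Set.Subset.antisymm
        · intro x hx
          obtain ⟨i, hi, hxi⟩ := hcover x hx
          exact Set.mem_iUnion.mpr ⟨⟨i, hi⟩, hxi⟩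
        · intro x hx
          obtain ⟨i, hxi⟩ := Set.mem_iUnion.mp hx
          exact hsub i i.2 hxi
      rw [hcov, aestronglyMeasurable_iUnion_iff]
      intro i
      have hwc : AEStronglyMeasurable w (volume.restrict (Set.Ico (ξ i) (ξ (i + 1)))) :=
        ((hK i i.2).continuousOn).aestronglyMeasurable measurableSet_Ico
      apply hwc.congr
      rw [Filter.EventuallyEq, ae_restrict_iff' measurableSet_Ico]
      exact Filter.Eventually.of_forall fun x hx => (hv_Ico x (hsub i i.2 hx)).symm
    have h2 : AEStronglyMeasurable v (volume.restrict (Set.Iio (-h))) := by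
      apply (aestronglyMeasurable_const (b := w (-h))).congr
      rw [Filter.EventuallyEq, ae_restrict_iff' measurableSet_Iio]
      exact Filter.Eventually.of_forall fun x hx => (hv_lt x hx).symm
    have h3 : AEStronglyMeasurable v (volume.restrict (Set.Ici (0 : ℝ))) := by
      apply (aestronglyMeasurable_const (b := z)).congr
      rw [Filter.EventuallyEq, ae_restrict_iff' measurableSet_Ici]
      exact Filter.Eventually.of_forall fun x hx => (hv_ge x hx).symm
    have huniv : (Set.univ : Set ℝ) = Set.Iio (-h) ∪ (Set.Ico (-h) 0 ∪ Set.Ici 0) := by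
      ext x
      simp only [Set.mem_univ, true_iff, Set.mem_union, Set.mem_Iio, Set.mem_Ico, Set.mem_Ici]
      rcases lt_or_ge x (-h) with h1 | h1
      · exact Or.inl h1
      · rcases lt_or_ge x 0 with h2 | h2
        · exact Or.inr (Or.inl ⟨h1, h2⟩)
        · exact Or.inr (Or.inr h2)
    have := Measure.restrict_univ (μ := (volume : Measure ℝ))
    rw [← this, huniv, aestronglyMeasurable_union_iff, aestronglyMeasurable_union_iff]
    exact ⟨h2, hIco, h3⟩
  have hint : ∀ a b : ℝ, IntervalIntegrable v volume a b := by
    intro a b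
    rw [intervalIntegrable_iff]
    apply Measure.integrableOn_of_bounded _ hv_meas (M := M)
    · exact ae_of_all _ fun x => hvM x
    · rw [Set.uIoc]; exact measure_Ioc_lt_top.ne
  -- the approximating sequence
  set εs : ℕ → ℝ := fun j => 1 / ((j : ℝ) + 1) with hεsdef
  have hεpos : ∀ j, 0 < εs j := fun j => by positivity
  have hεtend : Tendsto εs atTop (𝓝 0) := tendsto_one_div_add_atTop_nhds_zero_nat
  set ws : ℕ → ℝ → E n := fun j => GammaAux.davg v (εs j) with hwsdef
  have hws_c1 : ∀ j, ContDiff ℝ 1 (ws j) := fun j => GammaAux.davg_contDiff (hεpos j) hint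
  have hwsM : ∀ j x, ‖ws j x‖ ≤ M := fun j x => GammaAux.davg_norm_le (hεpos j) hint hvM x
  have hws0 : ∀ j, ws j 0 = z := by
    intro j
    have h1 : ‖ws j 0 - z‖ ≤ 0 := by
      apply GammaAux.davg_sub_le (hεpos j) hint
      intro t ht
      rw [hv_ge t ht.1, sub_self, norm_zero]
    rw [← sub_eq_zero]
    exact norm_le_zero_iff.mp h1
  have hwsll : ∀ j, leftLimit (ws j) 0 = z := by
    intro j
    have hc : Continuous (ws j) := (hws_c1 j).continuous
    have ht : Tendsto (ws j) (nhdsWithin 0 (Set.Iio 0)) (𝓝 (ws j 0)) :=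
      (hc.tendsto 0).mono_left nhdsWithin_le_nhds
    rw [hws0 j] at ht
    exact ht.limUnder_eq
  -- right continuity of v on [-h, 0)
  have hrc : ∀ x ∈ Set.Ico (-h) (0 : ℝ), ∀ η : ℝ, 0 < η →
      ∃ ρ > 0, ∀ t ∈ Set.Icc x (x + ρ), ‖v t - v x‖ ≤ η := by
    intro x hx η hη
    obtain ⟨i, hi, hxi⟩ := hcover x hx
    have hKi0 : (0 : ℝ) ≤ (K i hi : ℝ) := (K i hi).coe_nonneg
    have hgap : 0 < ξ (i + 1) - x := by linarith [hxi.2]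
    refine ⟨min ((ξ (i + 1) - x) / 2) (η / ((K i hi : ℝ) + 1)), lt_min (by linarith) (by positivity), ?_⟩
    intro t ht
    have ht1 : t ∈ Set.Ico (ξ i) (ξ (i + 1)) := by
      refine ⟨hxi.1.trans ht.1, ?_⟩
      have := min_le_left ((ξ (i + 1) - x) / 2) (η / ((K i hi : ℝ) + 1))
      have := ht.2
      linarith
    have hd := (hK i hi).dist_le_mul t ht1 x hxi
    rw [dist_eq_norm, Real.dist_eq] at hd
    rw [hv_Ico t (hsub i hi ht1), hv_Ico x hx]
    have habs : |t - x| ≤ η / ((K i hi : ℝ) + 1) := by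
      rw [abs_of_nonneg (sub_nonneg.mpr ht.1)]
      have := min_le_right ((ξ (i + 1) - x) / 2) (η / ((K i hi : ℝ) + 1))
      linarith [ht.2]
    calc ‖w t - w x‖ ≤ (K i hi : ℝ) * |t - x| := hd
      _ ≤ (K i hi : ℝ) * (η / ((K i hi : ℝ) + 1)) := by
          exact mul_le_mul_of_nonneg_left habs hKi0
      _ ≤ ((K i hi : ℝ) + 1) * (η / ((K i hi : ℝ) + 1)) := by
          apply mul_le_mul_of_nonneg_right (by linarith) (by positivity)
      _ = η := by field_simp
  -- pointwise convergence
  have hpt : ∀ x ∈ Set.Ico (-h) (0 : ℝ),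
      Tendsto (fun j => ‖w x - ws j x‖) atTop (𝓝 0) := by
    intro x hx
    rw [Metric.tendsto_atTop]
    intro η hη
    obtain ⟨ρ, hρpos, hval⟩ := hrc x hx (η / 2) (by positivity)
    obtain ⟨N, hN⟩ := Metric.tendsto_atTop.mp hεtend (ρ / 2) (by positivity)
    refine ⟨N, fun j hj => ?_⟩
    have hεle : 2 * εs j ≤ ρ := by
      have := hN j hj
      rw [Real.dist_eq, sub_zero, abs_of_pos (hεpos j)] at this
      linarith
    have hclose : ‖ws j x - v x‖ ≤ η / 2 := by
      apply GammaAux.davg_sub_le (hεpos j) hint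
      intro t ht
      exact hval t ⟨ht.1, ht.2.trans (by linarith)⟩
    rw [hv_Ico x hx] at hclose
    rw [Real.dist_eq, sub_zero, abs_of_nonneg (norm_nonneg _)]
    calc ‖w x - ws j x‖ = ‖ws j x - w x‖ := norm_sub_rev _ _
      _ ≤ η / 2 := hclose
      _ < η := by linarith
  refine ⟨ws, ⟨?_, ?_, ?_, ?_⟩, ?_, ?_, ?_⟩
  · -- Lipschitz
    intro j
    exact ⟨Real.toNNReal (2 * M / εs j),
      (GammaAux.davg_lipschitz (hεpos j) hint hvM).lipschitzOnWith (s := Set.Ico (-h) 0)⟩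
  · -- L¹ convergence
    have hIoo : ∀ᵐ t ∂(volume.restrict (Set.Ioc (-h) (0 : ℝ))), t ∈ Set.Ico (-h) (0 : ℝ) := by
      rw [ae_restrict_iff' measurableSet_Ioc]
      have h0 : ∀ᵐ t : ℝ ∂volume, t ≠ 0 := by
        rw [ae_iff]
        have : {t : ℝ | ¬ t ≠ 0} = {0} := by ext t; simp
        rw [this]
        exact measure_singleton 0
      filter_upwards [h0] with t ht hmem
      exact ⟨hmem.1.le, lt_of_le_of_ne hmem.2 ht⟩
    have hwv : (fun t => w t) =ᵐ[volume.restrict (Set.Ioc (-h) (0 : ℝ))] v := by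
      filter_upwards [hIoo] with t ht
      exact (hv_Ico t ht).symm
    have hmain : Tendsto (fun j => ∫ t in Set.Ioc (-h) (0 : ℝ), ‖w t - ws j t‖)
        atTop (𝓝 (∫ _ in Set.Ioc (-h) (0 : ℝ), (0 : ℝ))) := by
      apply MeasureTheory.tendsto_integral_of_dominated_convergence (bound := fun _ => 2 * M)
      · intro j
        have h1 : AEStronglyMeasurable (fun t => v t - ws j t)
            (volume.restrict (Set.Ioc (-h) (0 : ℝ))) :=
          hv_meas.restrict.sub ((hws_c1 j).continuous.aestronglyMeasurable.restrict)
        have h2 : AEStronglyMeasurable (fun t => w t - ws j t)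
            (volume.restrict (Set.Ioc (-h) (0 : ℝ))) := by
          apply h1.congr
          filter_upwards [hwv] with t ht
          rw [ht]
        exact h2.norm
      · exact (integrableOn_const measure_Ioc_lt_top.ne)
      · intro j
        filter_upwards [hIoo] with t ht
        rw [Real.norm_eq_abs, abs_of_nonneg (norm_nonneg _)]
        calc ‖w t - ws j t‖ ≤ ‖w t‖ + ‖ws j t‖ := norm_sub_le _ _
          _ ≤ M + M := add_le_add (le_trans (hleInf t ht) (le_max_right _ _)) (hwsM j t)
          _ = 2 * M := by ring
      · filter_upwards [hIoo] with t ht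
        exact hpt t ht
    rw [MeasureTheory.integral_zero] at hmain
    apply hmain.congr
    intro j
    rw [norm1, intervalIntegral.integral_of_le (by linarith : -h ≤ (0:ℝ))]
  · -- left limit at 0
    have : ∀ j, ‖z - leftLimit (ws j) 0‖ = 0 := by
      intro j; rw [hwsll j, sub_self, norm_zero]
    rw [show (fun j => ‖z - leftLimit (ws j) 0‖) = fun _ => (0:ℝ) from funext this]
    exact tendsto_const_nhds
  · -- pointwise convergence
    exact hpt
  · -- C¹
    intro j
    exact ((hws_c1 j).contDiffOn : ContDiffOn ℝ 1 (ws j) (Set.Icc (-h) 0))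
  · -- uniform bound
    intro j
    apply ciSup_le
    intro p
    exact hwsM j p.1
  · -- condition (w³)
    intro ξ0 hξ0mem hleft
    have hs0 : ξ 0 ≠ ξ0 := by rw [hξ0]; exact ne_of_lt hξ0mem.1
    set s : Finset ℕ := (Finset.range (k + 1)).filter (fun i => ξ i ≠ ξ0) with hsdef
    have hsne : s.Nonempty := ⟨0, by
      rw [hsdef, Finset.mem_filter]
      exact ⟨Finset.mem_range.mpr (Nat.succ_pos k), hs0⟩⟩
    set m : ℝ := s.inf' hsne (fun i => |ξ i - ξ0|) with hm
    have hmpos : 0 < m := by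
      rw [hm, Finset.lt_inf'_iff]
      intro i hi
      exact abs_pos.mpr (sub_ne_zero.mpr (Finset.mem_filter.mp hi).2)
    have hmle : ∀ i, i ≤ k → ξ i ≠ ξ0 → m ≤ |ξ i - ξ0| := fun i hik hnei =>
      Finset.inf'_le _ (Finset.mem_filter.mpr ⟨Finset.mem_range.mpr (Nat.lt_succ_of_le hik), hnei⟩)
    set δ : ℝ := min (min ((ξ0 + h) / 2) ((-ξ0) / 4)) (m / 3) with hδdef
    have hd1 : 0 < ξ0 + h := by linarith [hξ0mem.1]
    have hd2 : 0 < -ξ0 := by linarith [hξ0mem.2]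
    have hδpos : 0 < δ := lt_min (lt_min (by linarith) (by linarith)) (by linarith)
    have hδ1 : δ ≤ (ξ0 + h) / 2 := le_trans (min_le_left _ _) (min_le_left _ _)
    have hδ2 : δ ≤ (-ξ0) / 4 := le_trans (min_le_left _ _) (min_le_right _ _)
    have hδ3 : δ ≤ m / 3 := min_le_right _ _
    have hδa : -h < ξ0 - δ := by linarith
    have hδb : ξ0 + 2 * δ < 0 := by linarith
    have hδm : 2 * δ < m := by linarith
    set T : Set ℝ := Set.Icc (ξ0 - δ) (ξ0 + 2 * δ) with hT
    have hTsub : T ⊆ Set.Ico (-h) (0 : ℝ) := fun x hx => ⟨by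
      have := hx.1; simp only [hT, Set.mem_Icc] at *; linarith, by
      have := hx.2; simp only [hT, Set.mem_Icc] at *; linarith⟩
    -- continuity of v on T
    have hca : ∀ x ∈ T, ContinuousAt v x := by
      intro x hxT
      have hxI : x ∈ Set.Ico (-h) (0 : ℝ) := hTsub hxT
      obtain ⟨i, hi, hxi⟩ := hcover x hxI
      rcases eq_or_lt_of_le hxi.1 with heq | hlt
      · -- x is the breakpoint ξ i; it must equal ξ0
        have hxeq : x = ξ0 := by
          by_contra hnex
          have h1 : m ≤ |ξ i - ξ0| := hmle i hi.le (by rw [heq]; exact hnex)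
          have h2 : |x - ξ0| ≤ 2 * δ := by
            rw [abs_le]
            have h3 := hxT.1
            have h4 := hxT.2
            rw [hT, Set.mem_Icc] at hxT
            constructor <;> linarith [hxT.1, hxT.2, hδpos]
          rw [heq] at h1
          linarith
        have hright : ContinuousWithinAt v (Set.Ici x) x := by
          have hw1 : ContinuousWithinAt w (Set.Ico (ξ i) (ξ (i + 1))) x :=
            (hK i hi).continuousOn x hxi
          have hmem : Set.Ico (ξ i) (ξ (i + 1)) ∈ nhdsWithin x (Set.Ici x) :=
            Filter.mem_of_superset (Ico_mem_nhdsGE hxi.2)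
              (Set.Ico_subset_Ico_left hxi.1)
          have hw2 : ContinuousWithinAt w (Set.Ici x) x := hw1.mono_of_mem_nhdsWithin hmem
          apply hw2.congr_of_eventuallyEq ?_ (hv_Ico x hxI)
          apply Filter.eventuallyEq_of_mem hmem
          intro t ht
          exact hv_Ico t (hsub i hi ht)
        have hleftc : ContinuousWithinAt v (Set.Iio x) x := by
          have hipos : 0 < i := by
            rcases Nat.eq_zero_or_pos i with h0 | h0
            · exfalso
              rw [h0, hξ0] at heq
              rw [hxeq] at heq
              exact absurd heq.symm (ne_of_gt hξ0mem.1)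
            · exact h0
          obtain ⟨p, rfl⟩ : ∃ p, i = p + 1 := ⟨i - 1, (Nat.succ_pred_eq_of_pos hipos).symm⟩
          have hp : p < k := lt_of_le_of_lt (Nat.le_succ p) hi
          have hpx : ξ p < x := by rw [← heq]; exact hmono p hp
          set L := EuclideanSpace.equiv (Fin n) ℝ with hL
          have hlp : LipschitzOnWith (‖(L : E n →L[ℝ] (Fin n → ℝ))‖₊ * K p hp)
              (fun t => (L : E n →L[ℝ] (Fin n → ℝ)) (w t)) (Set.Ico (ξ p) (ξ (p + 1))) :=
            (L : E n →L[ℝ] (Fin n → ℝ)).lipschitz.comp_lipschitzOnWith (hK p hp)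
          obtain ⟨g, hg, hgeq⟩ := hlp.extend_pi
          set w' : ℝ → E n := fun t => L.symm (g t) with hw'
          have hw'c : Continuous w' := L.symm.continuous.comp hg.continuous
          have hw'eq : ∀ t ∈ Set.Ico (ξ p) (ξ (p + 1)), w' t = w t := by
            intro t ht
            simp only [hw']
            rw [← hgeq ht]
            simp
          have hmem2 : Set.Ico (ξ p) x ∈ nhdsWithin x (Set.Iio x) :=
            Ico_mem_nhdsLT_of_mem ⟨hpx, le_refl x⟩
          have htend : Tendsto w (nhdsWithin x (Set.Iio x)) (𝓝 (w' x)) := by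
            have h1 : Tendsto w' (nhdsWithin x (Set.Iio x)) (𝓝 (w' x)) :=
              (hw'c.tendsto x).mono_left nhdsWithin_le_nhds
            apply h1.congr'
            apply Filter.eventuallyEq_of_mem hmem2
            intro t ht
            exact hw'eq t ⟨ht.1, by rw [heq]; exact ht.2⟩
          have hllx : leftLimit w x = w' x := htend.limUnder_eq
          have hwx : Tendsto w (nhdsWithin x (Set.Iio x)) (𝓝 (w x)) := by
            have h2 : leftLimit w x = w x := by rw [hxeq]; exact hleft
            rw [h2] at hllx
            rw [hllx]
            exact htend
          have hvmem : Set.Ioo (-h) x ∈ nhdsWithin x (Set.Iio x) :=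
            Ioo_mem_nhdsLT_of_mem ⟨by rw [hxeq]; exact hξ0mem.1, le_refl x⟩
          have hvt : Tendsto v (nhdsWithin x (Set.Iio x)) (𝓝 (w x)) := by
            apply hwx.congr'
            apply Filter.eventuallyEq_of_mem hvmem
            intro t ht
            exact (hv_Ico t ⟨ht.1.le, lt_trans ht.2 hxI.2⟩).symm
          rw [← hv_Ico x hxI] at hvt
          exact hvt
        exact continuousAt_iff_continuous_left'_right'.mpr
          ⟨hleftc, hright.mono Set.Ioi_subset_Ici_self⟩
      · -- interior point of a piece
        have hopen : Set.Ioo (ξ i) (ξ (i + 1)) ∈ 𝓝 x := Ioo_mem_nhds hlt hxi.2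
        have hwca : ContinuousAt w x :=
          ContinuousOn.continuousAt ((hK i hi).continuousOn)
            (Filter.mem_of_superset hopen Set.Ioo_subset_Ico_self)
        have hev : v =ᶠ[𝓝 x] w :=
          Filter.eventuallyEq_of_mem hopen fun t ht =>
            hv_Ico t (hsub i hi (Set.Ioo_subset_Ico_self ht))
        exact hwca.congr hev.symm
    have hvcT : ContinuousOn v T := fun x hx => (hca x hx).continuousWithinAt
    have huc := isCompact_Icc.uniformContinuousOn_of_continuous hvcT
    rw [Metric.uniformContinuousOn_iff] at huc
    refine ⟨δ, hδpos, ?_⟩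
    rw [Metric.tendsto_atTop]
    intro η hη
    obtain ⟨ρ, hρpos, hρ⟩ := huc (η / 2) (by positivity)
    obtain ⟨N, hN⟩ := Metric.tendsto_atTop.mp hεtend (min ρ δ / 2)
      (by positivity)
    refine ⟨N, fun j hj => ?_⟩
    have hεj : 2 * εs j < min ρ δ := by
      have := hN j hj
      rw [Real.dist_eq, sub_zero, abs_of_pos (hεpos j)] at this
      have h1 : 0 < min ρ δ := lt_min hρpos hδpos
      linarith
    haveI : Nonempty (Set.Icc (-δ) δ) := ⟨⟨0, by constructor <;> linarith⟩⟩
    have hSle : (⨆ ζ : Set.Icc (-δ) δ, ‖w (ξ0 + ζ.1) - ws j (ξ0 + ζ.1)‖) ≤ η / 2 := by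
      apply ciSup_le
      intro ζ
      have hζ1 := ζ.2.1
      have hζ2 := ζ.2.2
      have hxT : ξ0 + ζ.1 ∈ T := by
        rw [hT, Set.mem_Icc]; constructor <;> linarith
      have hxI : ξ0 + ζ.1 ∈ Set.Ico (-h) (0 : ℝ) := hTsub hxT
      have hclose : ‖ws j (ξ0 + ζ.1) - v (ξ0 + ζ.1)‖ ≤ η / 2 := by
        apply GammaAux.davg_sub_le (hεpos j) hint
        intro t ht
        have htT : t ∈ T := by
          rw [hT, Set.mem_Icc]
          rw [hT, Set.mem_Icc] at hxT
          have h1 : 2 * εs j ≤ δ := le_trans hεj.le (min_le_right _ _)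
          exact ⟨le_trans hxT.1 ht.1, by linarith [ht.2, hζ2]⟩
        have hd : dist (v t) (v (ξ0 + ζ.1)) < η / 2 := by
          apply hρ t htT (ξ0 + ζ.1) hxT
          rw [Real.dist_eq, abs_of_nonneg (sub_nonneg.mpr ht.1)]
          have h1 : 2 * εs j < ρ := lt_of_lt_of_le hεj (min_le_left _ _)
          linarith [ht.2]
        rw [dist_eq_norm] at hd
        exact hd.le
      rw [hv_Ico _ hxI] at hclose
      calc ‖w (ξ0 + ζ.1) - ws j (ξ0 + ζ.1)‖ = ‖ws j (ξ0 + ζ.1) - w (ξ0 + ζ.1)‖ :=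
            norm_sub_rev _ _
        _ ≤ η / 2 := hclose
    have hS0 : 0 ≤ (⨆ ζ : Set.Icc (-δ) δ, ‖w (ξ0 + ζ.1) - ws j (ξ0 + ζ.1)‖) :=
      Real.iSup_nonneg fun ζ => norm_nonneg _
    rw [Real.dist_eq, sub_zero, abs_of_nonneg hS0]
    linarith
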